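/- Let r ≥ 1 and let I = (i_1,…,i_r), J = (j_1,…,j_r) be tuples of integers with i_1+⋯+i_r = 0 and j_1+⋯+j_r = 0. Then there exist tuples Ĩ = (ĩ_1,…,ĩ_r), J̃ = (j̃_1,…,j̃_r) of integers such that for every nilpotent group G of nilpotency class at most 2, the words w_{I,J} = x^{i_1}y^{j_1}x^{i_2}y^{j_2}⋯x^{i_r}y^{j_r} and c_{Ĩ,J̃} = [x^{ĩ_1},y^{j̃_1}][x^{ĩ_2},y^{j̃_2}]⋯[x^{ĩ_r},y^{j̃_r}] in the free group F_2 on x, y have the same image on G. -/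

import Mathlib

/-- The image of the word map on `G` induced by a word `w` in the free group
on `d` generators. -/
def wordImage {d : ℕ} (G : Type*) [Group G] (w : FreeGroup (Fin d)) : Set G :=
  Set.range fun f : Fin d → G => FreeGroup.lift f w

/-- `A` is a word image impostor in `G`: it contains `1`, is invariant under all
automorphisms of `G`, and is not the image of any word map. -/
def IsWordImageImpostor (G : Type*) [Group G] (A : Set G) : Prop :=
  (1 : G) ∈ A ∧ (∀ (φ : G ≃* G), ∀ g ∈ A, φ g ∈ A) ∧
    ¬ ∃ (d : ℕ) (_ : 1 ≤ d) (w : FreeGroup (Fin d)), A = wordImage G w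

/-- `G` is an extraspecial `p`-group: a `p`-group whose center, commutator subgroup
and Frattini subgroup coincide and have order `p`. -/
def IsExtraspecial (p : ℕ) (G : Type*) [Group G] : Prop :=
  IsPGroup p G ∧ Subgroup.center G = commutator G ∧
    Subgroup.center G = frattini G ∧ Nat.card (Subgroup.center G) = p

/-- The word x^{i₁}y^{j₁}⋯x^{i_r}y^{j_r}. -/
def wIJ (r : ℕ) (I J : Fin r → ℤ) : FreeGroup (Fin 2) :=
  (List.ofFn fun k : Fin r =>
    (FreeGroup.of (0 : Fin 2)) ^ (I k) * (FreeGroup.of (1 : Fin 2)) ^ (J k)).prod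

open scoped commutatorElement in
/-- The word [x^{i₁},y^{j₁}]⋯[x^{i_r},y^{j_r}]. -/
def cIJ (r : ℕ) (I J : Fin r → ℤ) : FreeGroup (Fin 2) :=
  (List.ofFn fun k : Fin r =>
    ⁅(FreeGroup.of (0 : Fin 2)) ^ (I k), (FreeGroup.of (1 : Fin 2)) ^ (J k)⁆).prod

open scoped commutatorElement

section Class2


variable {G : Type*} [Group G]

theorem c_mul_left (hc : ∀ a b g : G, Commute ⁅a, b⁆ g) (a b c : G) :
    ⁅a * b, c⁆ = ⁅a, c⁆ * ⁅b, c⁆ := by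
  have h1 : ⁅a * b, c⁆ = a * ⁅b, c⁆ * a⁻¹ * ⁅a, c⁆ := by group
  have h2 : a * ⁅b, c⁆ = ⁅b, c⁆ * a := ((hc b c a).eq).symm
  rw [h1, h2, mul_inv_cancel_right]
  exact (hc b c ⁅a, c⁆).eq

theorem c_mul_right (hc : ∀ a b g : G, Commute ⁅a, b⁆ g) (a b c : G) :
    ⁅a, b * c⁆ = ⁅a, b⁆ * ⁅a, c⁆ := by
  have h1 : ⁅a, b * c⁆ = ⁅a, b⁆ * (b * ⁅a, c⁆ * b⁻¹) := by group
  have h2 : b * ⁅a, c⁆ = ⁅a, c⁆ * b := ((hc a c b).eq).symm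
  rw [h1, h2, mul_inv_cancel_right]

theorem c_inv_left (hc : ∀ a b g : G, Commute ⁅a, b⁆ g) (a b : G) :
    ⁅a⁻¹, b⁆ = ⁅a, b⁆⁻¹ := by
  have := c_mul_left hc a a⁻¹ b
  rw [mul_inv_cancel, commutatorElement_one_left] at this
  exact (inv_eq_of_mul_eq_one_right this.symm).symm

theorem c_inv_right (hc : ∀ a b g : G, Commute ⁅a, b⁆ g) (a b : G) :
    ⁅a, b⁻¹⁆ = ⁅a, b⁆⁻¹ := by
  have := c_mul_right hc a b b⁻¹
  rw [mul_inv_cancel, commutatorElement_one_right] at this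
  exact (inv_eq_of_mul_eq_one_right this.symm).symm

theorem c_zpow_left (hc : ∀ a b g : G, Commute ⁅a, b⁆ g) (a b : G) (n : ℤ) :
    ⁅a ^ n, b⁆ = ⁅a, b⁆ ^ n := by
  induction n using Int.induction_on with
  | zero => simp
  | succ n ih => rw [zpow_add_one, c_mul_left hc, ih, zpow_add_one]
  | pred n ih => rw [zpow_sub_one, c_mul_left hc, ih, c_inv_left hc, zpow_sub_one]

theorem c_zpow_right (hc : ∀ a b g : G, Commute ⁅a, b⁆ g) (a b : G) (n : ℤ) :
    ⁅a, b ^ n⁆ = ⁅a, b⁆ ^ n := by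
  induction n using Int.induction_on with
  | zero => simp
  | succ n ih => rw [zpow_add_one, c_mul_right hc, ih, zpow_add_one]
  | pred n ih => rw [zpow_sub_one, c_mul_right hc, ih, c_inv_right hc, zpow_sub_one]

theorem c_zpow_zpow (hc : ∀ a b g : G, Commute ⁅a, b⁆ g) (a b : G) (m n : ℤ) :
    ⁅a ^ m, b ^ n⁆ = ⁅a, b⁆ ^ (m * n) := by
  rw [c_zpow_left hc, c_zpow_right hc, ← zpow_mul, mul_comm n m]

theorem swap_zpow (hc : ∀ a b g : G, Commute ⁅a, b⁆ g) (a b : G) (j s : ℤ) :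
    b ^ j * a ^ s = a ^ s * b ^ j * ⁅a, b⁆ ^ (-(j * s)) := by
  have h1 : ⁅b ^ j, a ^ s⁆ = ⁅a, b⁆ ^ (-(j * s)) := by
    rw [c_zpow_zpow hc, ← commutatorElement_inv, inv_zpow, ← zpow_neg]
  have h2 : b ^ j * a ^ s = ⁅b ^ j, a ^ s⁆ * (a ^ s * b ^ j) := by group
  rw [h2, h1, ((hc a b (a ^ s * b ^ j)).zpow_left (-(j * s))).eq, mul_assoc]

/-- commutator-counting exponent -/
def ee : List (ℤ × ℤ) → ℤ
  | [] => 0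
  | p :: l => ee l - p.2 * (l.map Prod.fst).sum

theorem main_prod (hc : ∀ a b g : G, Commute ⁅a, b⁆ g) (a b : G) (l : List (ℤ × ℤ)) :
    (l.map fun p => a ^ p.1 * b ^ p.2).prod =
      a ^ (l.map Prod.fst).sum * b ^ (l.map Prod.snd).sum * ⁅a, b⁆ ^ ee l := by
  induction l with
  | nil => simp [ee]
  | cons p l ih =>
      simp only [List.map_cons, List.prod_cons, List.sum_cons, ih, ee]
      have h1 : b ^ p.2 * a ^ (l.map Prod.fst).sum =
          a ^ (l.map Prod.fst).sum * b ^ p.2 * ⁅a, b⁆ ^ (-(p.2 * (l.map Prod.fst).sum)) :=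
        swap_zpow hc a b _ _
      calc a ^ p.1 * b ^ p.2 *
            (a ^ (l.map Prod.fst).sum * b ^ (l.map Prod.snd).sum * ⁅a, b⁆ ^ ee l)
          = a ^ p.1 * (b ^ p.2 * a ^ (l.map Prod.fst).sum) *
            b ^ (l.map Prod.snd).sum * ⁅a, b⁆ ^ ee l := by group
        _ = a ^ p.1 * (a ^ (l.map Prod.fst).sum * b ^ p.2 *
              ⁅a, b⁆ ^ (-(p.2 * (l.map Prod.fst).sum))) *
            b ^ (l.map Prod.snd).sum * ⁅a, b⁆ ^ ee l := by rw [h1]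
        _ = a ^ p.1 * a ^ (l.map Prod.fst).sum * (b ^ p.2 *
              (⁅a, b⁆ ^ (-(p.2 * (l.map Prod.fst).sum)) *
            b ^ (l.map Prod.snd).sum)) * ⁅a, b⁆ ^ ee l := by group
        _ = a ^ p.1 * a ^ (l.map Prod.fst).sum * (b ^ p.2 *
              (b ^ (l.map Prod.snd).sum *
            ⁅a, b⁆ ^ (-(p.2 * (l.map Prod.fst).sum)))) * ⁅a, b⁆ ^ ee l := by
            rw [((hc a b (b ^ (l.map Prod.snd).sum)).zpow_left
              (-(p.2 * (l.map Prod.fst).sum))).eq]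
        _ = a ^ (p.1 + (l.map Prod.fst).sum) * b ^ (p.2 + (l.map Prod.snd).sum) *
            ⁅a, b⁆ ^ (ee l - p.2 * (l.map Prod.fst).sum) := by
            rw [show ee l - p.2 * (l.map Prod.fst).sum
              = -(p.2 * (l.map Prod.fst).sum) + ee l by ring,
              zpow_add, zpow_add, zpow_add]
            group

theorem prod_zpow_list (z : G) (l : List ℤ) : (l.map (z ^ ·)).prod = z ^ l.sum := by
  induction l with
  | nil => simp
  | cons x l ih => simp [ih, zpow_add]

end Class2


section Eval

variable {G : Type*} [Group G]

theorem lift_w (hc : ∀ a b g : G, Commute ⁅a, b⁆ g) (r : ℕ) (I J : Fin r → ℤ)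
    (hI : ∑ k, I k = 0) (hJ : ∑ k, J k = 0) (f : Fin 2 → G) :
    FreeGroup.lift f (wIJ r I J) = ⁅f 0, f 1⁆ ^ ee (List.ofFn fun k => (I k, J k)) := by
  have h := main_prod hc (f 0) (f 1) (List.ofFn fun k => (I k, J k))
  rw [List.map_ofFn, List.map_ofFn, List.map_ofFn] at h
  simp only [Function.comp_def] at h
  unfold wIJ
  rw [map_list_prod, List.map_ofFn]
  have heq : ((FreeGroup.lift f) ∘ fun k =>
      (FreeGroup.of (0 : Fin 2)) ^ (I k) * (FreeGroup.of (1 : Fin 2)) ^ (J k)) =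
      fun k => f 0 ^ I k * f 1 ^ J k := by
    funext k
    simp [map_mul, map_zpow]
  rw [heq, h, List.sum_ofFn, List.sum_ofFn, hI, hJ, zpow_zero, zpow_zero, one_mul, one_mul]

theorem lift_c (hc : ∀ a b g : G, Commute ⁅a, b⁆ g) (r : ℕ) (I J : Fin r → ℤ)
    (f : Fin 2 → G) :
    FreeGroup.lift f (cIJ r I J) = ⁅f 0, f 1⁆ ^ ∑ k, I k * J k := by
  unfold cIJ
  rw [map_list_prod, List.map_ofFn]
  have heq : ((FreeGroup.lift f) ∘ fun k =>
      ⁅(FreeGroup.of (0 : Fin 2)) ^ (I k), (FreeGroup.of (1 : Fin 2)) ^ (J k)⁆) =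
      fun k => ⁅f 0, f 1⁆ ^ (I k * J k) := by
    funext k
    rw [Function.comp_apply, map_commutatorElement, map_zpow, map_zpow,
      FreeGroup.lift_apply_of, FreeGroup.lift_apply_of, c_zpow_zpow hc]
  rw [heq]
  have h := prod_zpow_list (⁅f 0, f 1⁆) (List.ofFn fun k => I k * J k)
  rw [List.map_ofFn, List.sum_ofFn] at h
  exact h

end Eval


/-- If the entries of I and of J each sum to 0, there exist Ĩ, J̃ such that on every
nilpotent group of class at most 2 the words w_{I,J} and c_{Ĩ,J̃} have the same image. -/
theorem wIJ_eq_cIJ_image (r : ℕ) (hr : 1 ≤ r) (I J : Fin r → ℤ)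
    (hI : ∑ k, I k = 0) (hJ : ∑ k, J k = 0) :
    ∃ I' J' : Fin r → ℤ,
      ∀ (G : Type*) [Group G], commutator G ≤ Subgroup.center G →
        wordImage G (wIJ r I J) = wordImage G (cIJ r I' J') := by
  set M := ee (List.ofFn fun k => (I k, J k)) with hM
  refine ⟨fun k => if k = ⟨0, hr⟩ then M else 0, fun _ => 1, ?_⟩

  intro G _ hG
  have hc : ∀ a b g : G, Commute ⁅a, b⁆ g := by
    intro a b g
    have hm : ⁅a, b⁆ ∈ commutator G := by
      rw [commutator_def]
      exact Subgroup.commutator_mem_commutator (Subgroup.mem_top a) (Subgroup.mem_top b)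
    exact ((Subgroup.mem_center_iff.mp (hG hm)) g).symm
  refine congrArg Set.range (funext fun f => ?_)
  rw [lift_w hc r I J hI hJ f, lift_c hc r _ _ f]
  congr 1
  simp [hM]
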